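/- Let f : ℝ → ℝ be Lipschitz with constant L_f on [m,M], let η : ℝ → ℝ be convex, and define the entropy flux q(u) = ∫ η'(w) f'(w) dw (i.e., q' = η' f' wherever f is differentiable). Then for u⁻, u⁺ ∈ [m,M] and α ≥ L_f, the intermediate state W(u⁻,u⁺) = (u⁻+u⁺)/2 − (f(u⁺)−f(u⁻))/(2α) satisfies η(W(u⁻,u⁺)) ≤ (η(u⁻)+η(u⁺))/2 − (q(u⁺)−q(u⁻))/(2α). -/

import Mathlib

/-- Entropy inequality for the HLL intermediate state. -/
theorem stmt1 (f η : ℝ → ℝ) (m M Lf α : ℝ)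
    (hf : ContDiff ℝ 1 f) (hf' : ∀ w ∈ Set.Icc m M, |deriv f w| ≤ Lf)
    (hη : ContDiff ℝ 1 η) (hηcvx : ConvexOn ℝ Set.univ η)
    (q : ℝ → ℝ) (hq : ∀ u, q u = ∫ w in m..u, deriv η w * deriv f w)
    (um up : ℝ) (hum : um ∈ Set.Icc m M) (hup : up ∈ Set.Icc m M)
    (hLf : 0 < Lf) (hα : Lf ≤ α) :
    η ((um + up) / 2 - (f up - f um) / (2 * α)) ≤
      (η um + η up) / 2 - (q up - q um) / (2 * α) := by
  have hα0 : (0:ℝ) < α := hLf.trans_le hα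
  have hfd : Differentiable ℝ f := hf.differentiable one_ne_zero
  have hηd : Differentiable ℝ η := hη.differentiable one_ne_zero
  have hηm : Monotone (deriv η) := by
    have := hηcvx.monotoneOn_deriv (fun x _ => hηd x)
    exact monotoneOn_univ.mp this
  -- Lipschitz bound on [m, M]
  have hLip : ∀ x ∈ Set.Icc m M, ∀ y ∈ Set.Icc m M, |f y - f x| ≤ α * |y - x| := by
    intro x hx y hy
    have h := (convex_Icc m M).norm_image_sub_le_of_norm_deriv_le
      (fun z _ => hfd z) (fun z hz => by simpa using (hf' z hz).trans hα) hx hy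
    simpa using h
  -- continuous integrand for q
  have hcont : Continuous (fun w => deriv η w * deriv f w) :=
    (hη.continuous_deriv le_rfl).mul (hf.continuous_deriv le_rfl)
  set Q : ℝ → ℝ := fun u => ∫ w in m..u, deriv η w * deriv f w with hQ
  have hQd : ∀ u, HasDerivAt Q (deriv η u * deriv f u) u := fun u =>
    intervalIntegral.integral_hasDerivAt_right (hcont.intervalIntegrable m u)
      (hcont.stronglyMeasurableAtFilter _ _) hcont.continuousAt
  -- the intermediate state as a function of the right value
  set w : ℝ → ℝ := fun u => (um + u) / 2 - (f u - f um) / (2 * α) with hwdef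
  have hwd : ∀ u, HasDerivAt w (1/2 - deriv f u / (2 * α)) u := by
    intro u
    have h1 : HasDerivAt (fun u => (um + u) / 2) (1/2) u := by
      simpa using ((hasDerivAt_id u).const_add um).div_const 2
    have h2 : HasDerivAt (fun u => (f u - f um) / (2 * α)) (deriv f u / (2 * α)) u :=
      ((hfd u).hasDerivAt.sub_const (f um)).div_const (2 * α)
    exact h1.sub h2
  set g : ℝ → ℝ := fun u => (η um + η u) / 2 - (Q u - Q um) / (2 * α) - η (w u) with hgdef
  have hgd : ∀ u, HasDerivAt g
      ((1/2 - deriv f u / (2 * α)) * (deriv η u - deriv η (w u))) u := by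
    intro u
    have h1 : HasDerivAt (fun u => (η um + η u) / 2) (deriv η u / 2) u := by
      simpa using (((hηd u).hasDerivAt).const_add (η um)).div_const 2
    have h2 : HasDerivAt (fun u => (Q u - Q um) / (2 * α))
        ((deriv η u * deriv f u) / (2 * α)) u := ((hQd u).sub_const (Q um)).div_const (2 * α)
    have h3 : HasDerivAt (fun u => η (w u))
        (deriv η (w u) * (1/2 - deriv f u / (2 * α))) u :=
      ((hηd (w u)).hasDerivAt).comp u (hwd u)
    have := (h1.sub h2).sub h3
    exact this.congr_deriv (by ring)
  have hwum : w um = um := by simp [hwdef]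
  have hgum : g um = 0 := by simp [hgdef, hwum]
  -- membership facts
  obtain ⟨hm1, hM1⟩ := hum
  obtain ⟨hm2, hM2⟩ := hup
  -- key sign facts for points between um and up
  have hfactor : ∀ x ∈ Set.Icc m M, 0 ≤ 1/2 - deriv f x / (2 * α) := by
    intro x hx
    have h := (hf' x hx).trans hα
    have : deriv f x ≤ α := (abs_le.mp h).2
    have h2 : deriv f x / (2 * α) ≤ 1/2 := by
      rw [div_le_div_iff₀ (by linarith) (by norm_num)]
      linarith
    linarith
  have hwmem : ∀ x ∈ Set.Icc m M, w x ∈ Set.uIcc um x := by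
    intro x hx
    have hb := hLip um ⟨hm1, hM1⟩ x hx
    rw [Set.mem_uIcc]
    rcases le_total um x with h | h
    · left
      constructor
      · have : f x - f um ≤ α * (x - um) := by
          have := (abs_le.mp hb).2
          rw [abs_of_nonneg (by linarith)] at this
          linarith
        have hd : (f x - f um) / (2 * α) ≤ (x - um) / 2 := by
          rw [div_le_div_iff₀ (by linarith) (by norm_num)]
          nlinarith
        simp only [hwdef]
        linarith
      · have : -(α * (x - um)) ≤ f x - f um := by
          have := (abs_le.mp hb).1
          rw [abs_of_nonneg (by linarith)] at this
          linarith
        have hd : -((x - um) / 2) ≤ (f x - f um) / (2 * α) := by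
          rw [le_div_iff₀ (by linarith : (0:ℝ) < 2 * α)]
          nlinarith
        simp only [hwdef]
        linarith
    · right
      constructor
      · have : f x - f um ≤ α * (um - x) := by
          have := (abs_le.mp hb).2
          rw [abs_of_nonpos (by linarith)] at this
          linarith
        have hd : (f x - f um) / (2 * α) ≤ (um - x) / 2 := by
          rw [div_le_div_iff₀ (by linarith) (by norm_num)]
          nlinarith
        simp only [hwdef]
        linarith
      · have : -(α * (um - x)) ≤ f x - f um := by
          have := (abs_le.mp hb).1
          rw [abs_of_nonpos (by linarith)] at this
          linarith
        have hd : -((um - x) / 2) ≤ (f x - f um) / (2 * α) := by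
          rw [le_div_iff₀ (by linarith : (0:ℝ) < 2 * α)]
          nlinarith
        simp only [hwdef]
        linarith
  -- main monotonicity argument
  have key : 0 ≤ g up := by
    rcases le_total um up with hle | hle
    · have hmono : MonotoneOn g (Set.Icc um up) := by
        apply monotoneOn_of_deriv_nonneg (convex_Icc um up)
        · exact Continuous.continuousOn (by
            have : Continuous g := by
              have := fun u => (hgd u).differentiableAt
              exact (Differentiable.continuous (fun u => (hgd u).differentiableAt))
            exact this)
        · intro x hx
          exact (hgd x).differentiableAt.differentiableWithinAt
        · intro x hx
          rw [(hgd x).deriv]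
          have hxIcc : x ∈ Set.Icc m M := by
            rw [interior_Icc] at hx
            exact ⟨hm1.trans hx.1.le, hx.2.le.trans hM2⟩
          have h1 := hfactor x hxIcc
          have h2 : deriv η (w x) ≤ deriv η x := by
            apply hηm
            have := hwmem x hxIcc
            rw [interior_Icc] at hx
            rw [Set.uIcc_of_le hx.1.le] at this
            exact this.2
          exact mul_nonneg h1 (by linarith)
      have := hmono (Set.left_mem_Icc.mpr hle) (Set.right_mem_Icc.mpr hle) hle
      rwa [hgum] at this
    · have hmono : AntitoneOn g (Set.Icc up um) := by
        apply antitoneOn_of_deriv_nonpos (convex_Icc up um)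
        · exact Continuous.continuousOn
            (Differentiable.continuous (fun u => (hgd u).differentiableAt))
        · intro x hx
          exact (hgd x).differentiableAt.differentiableWithinAt
        · intro x hx
          rw [(hgd x).deriv]
          have hxIcc : x ∈ Set.Icc m M := by
            rw [interior_Icc] at hx
            exact ⟨hm2.trans hx.1.le, hx.2.le.trans hM1⟩
          have h1 := hfactor x hxIcc
          have h2 : deriv η x ≤ deriv η (w x) := by
            apply hηm
            have := hwmem x hxIcc
            rw [interior_Icc] at hx
            rw [Set.uIcc_of_ge hx.2.le] at this
            exact this.1
          exact mul_nonpos_of_nonneg_of_nonpos h1 (by linarith)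
      have := hmono (Set.left_mem_Icc.mpr hle) (Set.right_mem_Icc.mpr hle) hle
      rwa [hgum] at this
  -- conclude
  have hq' : q up - q um = Q up - Q um := by rw [hq, hq]
  have : g up = (η um + η up) / 2 - (Q up - Q um) / (2 * α) -
      η ((um + up) / 2 - (f up - f um) / (2 * α)) := by simp [hgdef, hwdef]
  rw [this] at key
  rw [hq']
  linarith
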